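/- Let M be a finite MDP with discount γ ∈ (0,1), let π be a policy, let π_β and μ be action distributions with π_β(a|s) > 0 for all (s,a) and μ(a|s) ≥ 0, and let α ≥ 0. Consider the conservative (CQL) backup operator Q ↦ B^π Q − α·(μ/π_β), i.e., (B̃Q)(s,a) = r(s,a) + γ·Σ_{s'} T(s'|s,a)·Σ_{a'} π(a'|s')·Q(s',a') − α·μ(a|s)/π_β(a|s). Then: (i) B̃ is a γ-contraction in the sup norm on functions S × A → ℝ and hence has a unique fixed point Q̂; and (ii) this fixed point is a pointwise lower bound on the true Q-function: Q̂(s,a) ≤ Q^π(s,a) for all (s,a) ∈ S × A. -/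

import Mathlib

open Finset

/-- Bellman operator `B^π` for policy `π`:
`(B^π Q)(s,a) = r(s,a) + γ·E_{s'∼T(·|s,a), a'∼π(·|s')}[Q(s',a')]`. -/
noncomputable def bellmanOp {S A : Type} [Fintype S] [Fintype A]
    (T : S → A → S → ℝ) (r : S → A → ℝ) (γ : ℝ) (π : S → A → ℝ)
    (Q : S × A → ℝ) : S × A → ℝ :=
  fun sa => r sa.1 sa.2 + γ * ∑ s', T sa.1 sa.2 s' * ∑ a', π s' a' * Q (s', a')

/-- Conservative (CQL) backup operator `B̃ Q = B^π Q − α·(μ/π_β)`. -/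
noncomputable def cqlOp {S A : Type} [Fintype S] [Fintype A]
    (T : S → A → S → ℝ) (r : S → A → ℝ) (γ : ℝ) (π πβ μ : S → A → ℝ) (α : ℝ)
    (Q : S × A → ℝ) : S × A → ℝ :=
  fun sa => bellmanOp T r γ π Q sa - α * μ sa.1 sa.2 / πβ sa.1 sa.2

lemma weighted_avg_bound {S A : Type} [Fintype S] [Fintype A]
    (T : S → A → S → ℝ) (π : S → A → ℝ)
    (hT0 : ∀ s a s', 0 ≤ T s a s') (hT1 : ∀ s a, ∑ s', T s a s' = 1)
    (hπ0 : ∀ s a, 0 ≤ π s a) (hπ1 : ∀ s, ∑ a, π s a = 1)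
    (D : S × A → ℝ) (c : ℝ) (hD : ∀ sa, D sa ≤ c) (s : S) (a : A) :
    ∑ s', T s a s' * ∑ a', π s' a' * D (s', a') ≤ c := by
  have inner : ∀ s', ∑ a', π s' a' * D (s', a') ≤ c := by
    intro s'
    calc ∑ a', π s' a' * D (s', a') ≤ ∑ a', π s' a' * c :=
          Finset.sum_le_sum fun a' _ =>
            mul_le_mul_of_nonneg_left (hD (s', a')) (hπ0 s' a')
      _ = c := by rw [← Finset.sum_mul, hπ1 s', one_mul]
  calc ∑ s', T s a s' * ∑ a', π s' a' * D (s', a')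
      ≤ ∑ s', T s a s' * c :=
        Finset.sum_le_sum fun s' _ =>
          mul_le_mul_of_nonneg_left (inner s') (hT0 s a s')
    _ = c := by rw [← Finset.sum_mul, hT1 s a, one_mul]

lemma sum_sub_helper {S A : Type} [Fintype S] [Fintype A]
    (T : S → A → S → ℝ) (π : S → A → ℝ) (F G : S × A → ℝ) (s : S) (a : A) :
    ∑ s', T s a s' * ∑ a', π s' a' * (F (s', a') - G (s', a'))
      = (∑ s', T s a s' * ∑ a', π s' a' * F (s', a'))
        - (∑ s', T s a s' * ∑ a', π s' a' * G (s', a')) := by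
  rw [← Finset.sum_sub_distrib]
  refine Finset.sum_congr rfl fun s' _ => ?_
  rw [← mul_sub, ← Finset.sum_sub_distrib]
  congr 1
  refine Finset.sum_congr rfl fun a' _ => ?_
  ring

/-- **The conservative (CQL) backup is a `γ`-contraction and its fixed point is a
pointwise lower bound on the true Q-function.**
(i) `B̃` is a `γ`-contraction in the sup norm on `S × A → ℝ`, hence has a unique fixed
point `Q̂`; (ii) if `Q̂` is the fixed point of `B̃` and `Q^π` is the fixed point of `B^π`
(the true Q-function of `π`), then `Q̂(s,a) ≤ Q^π(s,a)` for all `(s,a)`. -/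
theorem cql_contraction_and_lower_bound
    {S A : Type} [Fintype S] [Fintype A]
    (T : S → A → S → ℝ) (r : S → A → ℝ) (γ : ℝ)
    (π πβ μ : S → A → ℝ) (α : ℝ)
    (hγ0 : 0 < γ) (hγ1 : γ < 1)
    (hT0 : ∀ s a s', 0 ≤ T s a s') (hT1 : ∀ s a, ∑ s', T s a s' = 1)
    (hπ0 : ∀ s a, 0 ≤ π s a) (hπ1 : ∀ s, ∑ a, π s a = 1)
    (hβ0 : ∀ s a, 0 < πβ s a) (hμ0 : ∀ s a, 0 ≤ μ s a)
    (hα : 0 ≤ α) :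
    (∀ Q₁ Q₂ : S × A → ℝ,
      ‖cqlOp T r γ π πβ μ α Q₁ - cqlOp T r γ π πβ μ α Q₂‖ ≤ γ * ‖Q₁ - Q₂‖) ∧
    (∃! Qhat : S × A → ℝ, cqlOp T r γ π πβ μ α Qhat = Qhat) ∧
    (∀ Qhat Qpi : S × A → ℝ,
      cqlOp T r γ π πβ μ α Qhat = Qhat → bellmanOp T r γ π Qpi = Qpi →
      ∀ sa : S × A, Qhat sa ≤ Qpi sa) := by
  have key : ∀ Q₁ Q₂ : S × A → ℝ,
      ‖cqlOp T r γ π πβ μ α Q₁ - cqlOp T r γ π πβ μ α Q₂‖ ≤ γ * ‖Q₁ - Q₂‖ := by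
    intro Q₁ Q₂
    have hnn : 0 ≤ γ * ‖Q₁ - Q₂‖ := mul_nonneg hγ0.le (norm_nonneg _)
    rw [pi_norm_le_iff_of_nonneg hnn]
    intro sa
    have hDle : ∀ y : S × A, Q₁ y - Q₂ y ≤ ‖Q₁ - Q₂‖ := fun y =>
      (le_abs_self _).trans (by
        have := norm_le_pi_norm (Q₁ - Q₂) y
        simpa [Real.norm_eq_abs] using this)
    have hDge : ∀ y : S × A, Q₂ y - Q₁ y ≤ ‖Q₁ - Q₂‖ := fun y =>
      (le_abs_self _).trans (by
        have := norm_le_pi_norm (Q₁ - Q₂) y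
        simpa [Real.norm_eq_abs, abs_sub_comm (Q₁ y) (Q₂ y)] using this)
    have h1 := weighted_avg_bound T π hT0 hT1 hπ0 hπ1
      (fun y => Q₁ y - Q₂ y) ‖Q₁ - Q₂‖ hDle sa.1 sa.2
    have h2 := weighted_avg_bound T π hT0 hT1 hπ0 hπ1
      (fun y => Q₂ y - Q₁ y) ‖Q₁ - Q₂‖ hDge sa.1 sa.2
    rw [sum_sub_helper] at h1 h2
    have heq : (cqlOp T r γ π πβ μ α Q₁ - cqlOp T r γ π πβ μ α Q₂) sa
        = γ * ((∑ s', T sa.1 sa.2 s' * ∑ a', π s' a' * Q₁ (s', a'))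
            - (∑ s', T sa.1 sa.2 s' * ∑ a', π s' a' * Q₂ (s', a'))) := by
      simp only [Pi.sub_apply, cqlOp, bellmanOp]
      ring
    rw [heq, Real.norm_eq_abs, abs_mul, abs_of_pos hγ0]
    apply mul_le_mul_of_nonneg_left _ hγ0.le
    rw [abs_le]
    constructor <;> linarith
  refine ⟨key, ?_, ?_⟩
  · set f := cqlOp T r γ π πβ μ α with hf
    have hK : (⟨γ, hγ0.le⟩ : NNReal) < 1 := by
      exact NNReal.coe_lt_coe.mp hγ1
    have hlip : LipschitzWith ⟨γ, hγ0.le⟩ f :=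
      LipschitzWith.of_dist_le_mul fun Q₁ Q₂ => by
        rw [dist_eq_norm, dist_eq_norm]; exact key Q₁ Q₂
    have hc : ContractingWith ⟨γ, hγ0.le⟩ f := ⟨hK, hlip⟩
    exact ⟨hc.fixedPoint f, hc.fixedPoint_isFixedPt,
      fun y hy => hc.fixedPoint_unique hy⟩
  · intro Qhat Qpi hQhat hQpi sa
    by_contra hlt
    push_neg at hlt
    have hne : (Finset.univ : Finset (S × A)).Nonempty := ⟨sa, Finset.mem_univ sa⟩
    obtain ⟨x, -, hmax⟩ := Finset.exists_max_image Finset.univ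
      (fun y => Qhat y - Qpi y) hne
    have hMx : 0 < Qhat x - Qpi x :=
      lt_of_lt_of_le (by linarith) (hmax sa (Finset.mem_univ sa))
    have havg := weighted_avg_bound T π hT0 hT1 hπ0 hπ1
      (fun y => Qhat y - Qpi y) (Qhat x - Qpi x)
      (fun y => hmax y (Finset.mem_univ y)) x.1 x.2
    rw [sum_sub_helper] at havg
    have h1 : cqlOp T r γ π πβ μ α Qhat x = Qhat x := congrFun hQhat x
    have h2 : bellmanOp T r γ π Qpi x = Qpi x := congrFun hQpi x
    simp only [cqlOp, bellmanOp] at h1 h2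
    have hpen : 0 ≤ α * μ x.1 x.2 / πβ x.1 x.2 :=
      div_nonneg (mul_nonneg hα (hμ0 x.1 x.2)) (hβ0 x.1 x.2).le
    have hfix : Qhat x - Qpi x ≤ γ * (Qhat x - Qpi x) := by nlinarith
    nlinarith
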